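/- If f_L ≡ f_R = g (i.e., the flux is continuous in space), then the DFLU flux F(u_L,u_R) = min{ g(min{u_L,θ}), g(max{u_R,θ}) } equals the Godunov flux: F(u_L,u_R) = min over [u_L,u_R] of g if u_L ≤ u_R, and max over [u_R,u_L] of g if u_L > u_R. -/
import Mathlib


/-- When the left and right fluxes coincide, the DFLU flux equals the
Godunov flux. -/
theorem dflu_eq_godunov
    (g : ℝ → ℝ) (θ : ℝ) (hθ : θ ∈ Set.Icc (0:ℝ) 1)
    (hcont : ContinuousOn g (Set.Icc 0 1))
    (hinc : StrictMonoOn g (Set.Icc 0 θ))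
    (hdec : StrictAntiOn g (Set.Icc θ 1))
    (uL uR : ℝ) (hL : uL ∈ Set.Icc (0:ℝ) 1) (hR : uR ∈ Set.Icc (0:ℝ) 1) :
    (uL ≤ uR →
      min (g (min uL θ)) (g (max uR θ)) = sInf (g '' Set.Icc uL uR)) ∧
    (uR < uL →
      min (g (min uL θ)) (g (max uR θ)) = sSup (g '' Set.Icc uR uL)) := by
  obtain ⟨hL0, hL1⟩ := hL
  obtain ⟨hR0, hR1⟩ := hR
  obtain ⟨hθ0, hθ1⟩ := hθ
  have hmono := hinc.monotoneOn
  have hanti := hdec.antitoneOn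
  constructor
  · intro hle
    rcases le_or_gt uR θ with h1 | h1
    · -- uL ≤ uR ≤ θ : increasing region, inf = g uL
      rw [min_eq_left (hle.trans h1), max_eq_right h1]
      have hIsLeast : IsLeast (g '' Set.Icc uL uR) (g uL) := by
        constructor
        · exact ⟨uL, ⟨le_refl _, hle⟩, rfl⟩
        · rintro y ⟨x, ⟨hx1, hx2⟩, rfl⟩
          exact hmono ⟨hL0, hle.trans h1⟩ ⟨hL0.trans hx1, hx2.trans h1⟩ hx1
      rw [hIsLeast.csInf_eq]
      exact min_eq_left (hmono ⟨hL0, hle.trans h1⟩ ⟨hθ0, le_refl _⟩ (hle.trans h1))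
    · rcases le_or_gt θ uL with h2 | h2
      · -- θ ≤ uL ≤ uR : decreasing region, inf = g uR
        rw [min_eq_right h2, max_eq_left h1.le]
        have hIsLeast : IsLeast (g '' Set.Icc uL uR) (g uR) := by
          constructor
          · exact ⟨uR, ⟨hle, le_refl _⟩, rfl⟩
          · rintro y ⟨x, ⟨hx1, hx2⟩, rfl⟩
            exact hanti ⟨h2.trans hx1, hx2.trans hR1⟩ ⟨h2.trans hle, hR1⟩ hx2
        rw [hIsLeast.csInf_eq]
        exact min_eq_right (hanti ⟨le_refl _, hθ1⟩ ⟨h2.trans hle, hR1⟩ (h2.trans hle))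
      · -- uL < θ < uR
        rw [min_eq_left h2.le, max_eq_left h1.le]
        have hIsLeast : IsLeast (g '' Set.Icc uL uR) (min (g uL) (g uR)) := by
          constructor
          · rcases min_cases (g uL) (g uR) with ⟨h, _⟩ | ⟨h, _⟩ <;> rw [h]
            · exact ⟨uL, ⟨le_refl _, hle⟩, rfl⟩
            · exact ⟨uR, ⟨hle, le_refl _⟩, rfl⟩
          · rintro y ⟨x, ⟨hx1, hx2⟩, rfl⟩
            rcases le_or_gt x θ with hx | hx
            · exact le_trans (min_le_left _ _)
                (hmono ⟨hL0, h2.le⟩ ⟨hL0.trans hx1, hx⟩ hx1)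
            · exact le_trans (min_le_right _ _)
                (hanti ⟨hx.le, hx2.trans hR1⟩ ⟨h1.le, hR1⟩ hx2)
        rw [hIsLeast.csInf_eq]
  · intro hlt
    rcases le_or_gt uL θ with h1 | h1
    · -- uR < uL ≤ θ : increasing region, sup = g uL
      rw [min_eq_left h1, max_eq_right (hlt.le.trans h1)]
      have hIsGreat : IsGreatest (g '' Set.Icc uR uL) (g uL) := by
        constructor
        · exact ⟨uL, ⟨hlt.le, le_refl _⟩, rfl⟩
        · rintro y ⟨x, ⟨hx1, hx2⟩, rfl⟩
          exact hmono ⟨hR0.trans hx1, hx2.trans h1⟩ ⟨hL0, h1⟩ hx2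
      rw [hIsGreat.csSup_eq]
      exact min_eq_left (hmono ⟨hL0, h1⟩ ⟨hθ0, le_refl _⟩ h1)
    · rcases le_or_gt θ uR with h2 | h2
      · -- θ ≤ uR < uL : decreasing region, sup = g uR
        rw [min_eq_right h1.le, max_eq_left h2]
        have hIsGreat : IsGreatest (g '' Set.Icc uR uL) (g uR) := by
          constructor
          · exact ⟨uR, ⟨le_refl _, hlt.le⟩, rfl⟩
          · rintro y ⟨x, ⟨hx1, hx2⟩, rfl⟩
            exact hanti ⟨h2, hR1⟩ ⟨h2.trans hx1, hx2.trans hL1⟩ hx1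
        rw [hIsGreat.csSup_eq]
        exact min_eq_right (hanti ⟨le_refl _, hθ1⟩ ⟨h2, hR1⟩ h2)
      · -- uR < θ < uL : sup = g θ
        rw [min_eq_right h1.le, max_eq_right h2.le]
        have hIsGreat : IsGreatest (g '' Set.Icc uR uL) (g θ) := by
          constructor
          · exact ⟨θ, ⟨h2.le, h1.le⟩, rfl⟩
          · rintro y ⟨x, ⟨hx1, hx2⟩, rfl⟩
            rcases le_or_gt x θ with hx | hx
            · exact hmono ⟨hR0.trans hx1, hx⟩ ⟨hθ0, le_refl _⟩ hx
            · exact hanti ⟨le_refl _, hθ1⟩ ⟨hx.le, hx2.trans hL1⟩ hx.le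
        rw [hIsGreat.csSup_eq]
        exact min_self _
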